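/- If θ ∈ (0, 1/4] and θ̃ ∈ [θ/3, 3θ] with θ̃ ∈ (0,1), then D(θ‖θ̃) ≤ 3(θ−θ̃)² / (2·θ*(1−θ*)), where θ* = max{θ, θ̃}. -/

import Mathlib

noncomputable def klBern (θ θt : ℝ) : ℝ :=
  θ * Real.log (θ / θt) + (1 - θ) * Real.log ((1 - θ) / (1 - θt))

open Real in
lemma kl_aux_hasDerivAt (θ c x : ℝ) (hx : 0 < x) (hx1 : x < 1) (hc : c ≠ 0) :
    HasDerivAt (fun y => (y - θ)^2/(2*c) - (θ * Real.log θ - θ * Real.log y) -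
      ((1-θ) * Real.log (1-θ) - (1-θ) * Real.log (1-y)))
      ((x - θ) * (x*(1-x) - c) / (c * (x*(1-x)))) x := by
  have h1 : HasDerivAt (fun y : ℝ => (y - θ)^2/(2*c)) (2*(x-θ)/(2*c)) x := by
    have := (((hasDerivAt_id x).sub_const θ).pow 2).div_const (2*c)
    simpa using this
  have h2 : HasDerivAt (fun y : ℝ => θ * Real.log θ - θ * Real.log y) (-(θ * x⁻¹)) x := by
    have := ((Real.hasDerivAt_log (ne_of_gt hx)).const_mul θ).const_sub (θ * Real.log θ)
    simpa using this
  have h3 : HasDerivAt (fun y : ℝ => 1 - y) (-1) x := by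
    simpa using (hasDerivAt_id x).const_sub 1
  have h4 : HasDerivAt (fun y : ℝ => Real.log (1 - y)) ((1-x)⁻¹ * (-1)) x := by
    exact (Real.hasDerivAt_log (by linarith)).comp x h3
  have h6 : HasDerivAt (fun y : ℝ => (1-θ) * Real.log (1-θ) - (1-θ) * Real.log (1-y))
      (-((1-θ) * ((1-x)⁻¹ * (-1)))) x := by
    exact (h4.const_mul (1-θ)).const_sub _
  have := (h1.sub h2).sub h6
  refine this.congr_deriv ?_
  have hx' : x ≠ 0 := ne_of_gt hx
  have hx1' : (1:ℝ) - x ≠ 0 := by linarith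
  field_simp
  ring

open Real in
lemma kl_bound_aux (θ c a b : ℝ) (ha : 0 < a) (hb : b < 1) (hθa : a ≤ θ) (hθb : θ ≤ b)
    (hc : 0 < c) (hmin : ∀ x ∈ Set.Icc a b, c ≤ x * (1 - x)) :
    ∀ t ∈ Set.Icc a b, klBern θ t ≤ (θ - t)^2 / (2*c) := by
  have hθ0 : 0 < θ := lt_of_lt_of_le ha hθa
  have hθ1 : θ < 1 := lt_of_le_of_lt hθb hb
  set F : ℝ → ℝ := fun y => (y - θ)^2/(2*c) - (θ * Real.log θ - θ * Real.log y) -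
      ((1-θ) * Real.log (1-θ) - (1-θ) * Real.log (1-y)) with hF
  have hcont : ∀ s ⊆ Set.Icc a b, ContinuousOn F s := by
    intro s hs
    apply ContinuousOn.sub
    apply ContinuousOn.sub
    · fun_prop
    · apply ContinuousOn.sub continuousOn_const
      apply ContinuousOn.mul continuousOn_const
      apply ContinuousOn.log continuousOn_id
      intro x hx; exact ne_of_gt (lt_of_lt_of_le ha (hs hx).1)
    · apply ContinuousOn.sub continuousOn_const
      apply ContinuousOn.mul continuousOn_const
      apply ContinuousOn.log (by fun_prop)
      intro x hx
      have := (hs hx).2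
      have : x < 1 := lt_of_le_of_lt this hb
      intro h; linarith [sub_eq_zero.mp h]
  have hderiv : ∀ x ∈ Set.Icc a b, HasDerivAt F ((x - θ) * (x*(1-x) - c) / (c * (x*(1-x)))) x := by
    intro x hx
    exact kl_aux_hasDerivAt θ c x (lt_of_lt_of_le ha hx.1) (lt_of_le_of_lt hx.2 hb) (ne_of_gt hc)
  have hmono : MonotoneOn F (Set.Icc θ b) := by
    apply monotoneOn_of_deriv_nonneg (convex_Icc θ b)
      (hcont _ (Set.Icc_subset_Icc hθa le_rfl))
    · intro x hx
      rw [interior_Icc] at hx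
      exact (hderiv x ⟨le_trans hθa (le_of_lt hx.1), le_of_lt hx.2⟩).differentiableAt.differentiableWithinAt
    · intro x hx
      rw [interior_Icc] at hx
      have hxm : x ∈ Set.Icc a b := ⟨le_trans hθa (le_of_lt hx.1), le_of_lt hx.2⟩
      rw [(hderiv x hxm).deriv]
      apply div_nonneg
      · apply mul_nonneg (by linarith [hx.1])
        linarith [hmin x hxm]
      · exact le_of_lt (mul_pos hc (lt_of_lt_of_le hc (hmin x hxm)))
  have hanti : AntitoneOn F (Set.Icc a θ) := by
    apply antitoneOn_of_deriv_nonpos (convex_Icc a θ)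
      (hcont _ (Set.Icc_subset_Icc le_rfl hθb))
    · intro x hx
      rw [interior_Icc] at hx
      exact (hderiv x ⟨le_of_lt hx.1, le_trans (le_of_lt hx.2) hθb⟩).differentiableAt.differentiableWithinAt
    · intro x hx
      rw [interior_Icc] at hx
      have hxm : x ∈ Set.Icc a b := ⟨le_of_lt hx.1, le_trans (le_of_lt hx.2) hθb⟩
      rw [(hderiv x hxm).deriv]
      apply div_nonpos_of_nonpos_of_nonneg
      · apply mul_nonpos_of_nonpos_of_nonneg (by linarith [hx.2])
        linarith [hmin x hxm]
      · exact le_of_lt (mul_pos hc (lt_of_lt_of_le hc (hmin x hxm)))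
  have hFθ : F θ = 0 := by simp [hF]
  intro t ht
  have hFt : 0 ≤ F t := by
    rcases le_total t θ with h | h
    · have := hanti ⟨ht.1, h⟩ ⟨hθa, le_rfl⟩ h
      rw [hFθ] at this; exact this
    · have := hmono ⟨le_rfl, hθb⟩ ⟨h, ht.2⟩ h
      rw [hFθ] at this; exact this
  have ht0 : 0 < t := lt_of_lt_of_le ha ht.1
  have ht1 : t < 1 := lt_of_le_of_lt ht.2 hb
  have hkl : klBern θ t = (θ * Real.log θ - θ * Real.log t) +
      ((1-θ) * Real.log (1-θ) - (1-θ) * Real.log (1-t)) := by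
    rw [klBern, Real.log_div (ne_of_gt hθ0) (ne_of_gt ht0),
      Real.log_div (by linarith) (by linarith)]
    ring
  have : (θ - t)^2 = (t - θ)^2 := by ring
  rw [hkl, this]
  simp only [hF] at hFt
  linarith

theorem kl_upper_bound_near_boundary (θ θt : ℝ)
    (hθ : θ ∈ Set.Ioc (0:ℝ) (1/4)) (hθt : θt ∈ Set.Icc (θ/3) (3*θ))
    (hθt' : θt ∈ Set.Ioo (0:ℝ) 1) :
    klBern θ θt ≤ 3 * (θ - θt) ^ 2 / (2 * max θ θt * (1 - max θ θt)) := by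
  obtain ⟨hθ0, hθ4⟩ := hθ
  obtain ⟨hθt0, hθt1⟩ := hθt'
  obtain ⟨hl, hr⟩ := hθt
  rcases le_total θ θt with h | h
  · -- θ ≤ θt, max = θt
    rw [max_eq_right h]
    have hc : 0 < θt * (1 - θt) / 3 := by
      apply div_pos (mul_pos hθt0 (by linarith)) (by norm_num)
    have hmin : ∀ x ∈ Set.Icc θ θt, θt * (1 - θt) / 3 ≤ x * (1 - x) := by
      intro x hx
      nlinarith [hx.1, hx.2, mul_nonneg (sub_nonneg.2 hx.1) (sub_nonneg.2 hx.2)]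
    have := kl_bound_aux θ (θt * (1 - θt) / 3) θ θt hθ0 hθt1 le_rfl h hc hmin θt
      ⟨h, le_rfl⟩
    calc klBern θ θt ≤ (θ - θt)^2 / (2 * (θt * (1 - θt) / 3)) := this
      _ = 3 * (θ - θt) ^ 2 / (2 * θt * (1 - θt)) := by
          rw [div_eq_div_iff (by positivity) (by nlinarith)]; ring
  · -- θt ≤ θ, max = θ
    rw [max_eq_left h]
    have hθ1 : θ < 1 := by linarith
    have hc : 0 < θ * (1 - θ) / 3 := by
      apply div_pos (mul_pos hθ0 (by linarith)) (by norm_num)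
    have hmin : ∀ x ∈ Set.Icc θt θ, θ * (1 - θ) / 3 ≤ x * (1 - x) := by
      intro x hx
      nlinarith [hx.1, hx.2]
    have := kl_bound_aux θ (θ * (1 - θ) / 3) θt θ hθt0 hθ1 h le_rfl hc hmin θt
      ⟨le_rfl, h⟩
    calc klBern θ θt ≤ (θ - θt)^2 / (2 * (θ * (1 - θ) / 3)) := this
      _ = 3 * (θ - θt) ^ 2 / (2 * θ * (1 - θ)) := by
          rw [div_eq_div_iff (by positivity) (by nlinarith)]; ring
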